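/- Under the hypotheses of the inexact Newton theorem (as above), with t* the smallest root of g_d, the following invariance holds: for every z ∈ B̄(x₀, t*), Df(z) is invertible and for every r ∈ X with ‖r‖ ≤ d, the point z − Df(z)⁻¹f(z) + r lies in B̄(x₀, t*). Consequently, any sequence x_{k+1} = x_k − Df(x_k)⁻¹f(x_k) + r_k with x_0 = x₀ and ‖r_k‖ ≤ d remains in B̄(x₀, t*) with Df(x_k) invertible for all k. -/

import Mathlib

/-- Quadratic Taylor bound: if the derivative is `K`-Lipschitz-compared to its value at `a`
along the segment, then `‖f b - f a - f' a (b - a)‖ ≤ K/2 * ‖b - a‖²`. -/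
theorem taylor_quad_aux {X Y : Type*} [NormedAddCommGroup X] [NormedSpace ℝ X]
    [NormedAddCommGroup Y] [NormedSpace ℝ Y]
    {f : X → Y} {f' : X → X →L[ℝ] Y} {a b : X} {K : ℝ}
    (hf : ∀ x ∈ segment ℝ a b, HasFDerivAt f (f' x) x)
    (hLip : ∀ x ∈ segment ℝ a b, ‖f' x - f' a‖ ≤ K * ‖x - a‖) :
    ‖f b - f a - f' a (b - a)‖ ≤ K / 2 * ‖b - a‖ ^ 2 := by
  set v := b - a with hv
  set g : ℝ → Y := fun s => f (a + s • v) - s • f' a v - f a with hg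
  have hseg : ∀ s ∈ Set.Icc (0:ℝ) 1, a + s • v ∈ segment ℝ a b := by
    intro s hs
    rw [segment_eq_image' ℝ a b]
    exact ⟨s, hs, rfl⟩
  have hgd : ∀ s ∈ Set.Icc (0:ℝ) 1,
      HasDerivAt g (f' (a + s • v) v - f' a v) s := by
    intro s hs
    have hc : HasDerivAt (fun s : ℝ => a + s • v) v s := by
      simpa using ((hasDerivAt_id s).smul_const v).const_add a
    have h1 : HasDerivAt (fun s : ℝ => f (a + s • v)) (f' (a + s • v) v) s := by
      have := (hf _ (hseg s hs)).comp_hasDerivAt s hc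
      exact this
    have h2 : HasDerivAt (fun s : ℝ => s • f' a v) (f' a v) s := by
      simpa using (hasDerivAt_id s).smul_const (f' a v)
    exact (h1.sub h2).sub_const (f a)
  have key : ∀ x ∈ Set.Icc (0:ℝ) 1, ‖g x‖ ≤ K / 2 * x ^ 2 * ‖v‖ ^ 2 := by
    have hB : ∀ s : ℝ, HasDerivAt (fun x : ℝ => K / 2 * x ^ 2 * ‖v‖ ^ 2)
        (K * s * ‖v‖ ^ 2) s := by
      intro s
      have := ((hasDerivAt_pow 2 s).const_mul (K / 2)).mul_const (‖v‖ ^ 2)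
      exact this.congr_deriv (by push_cast; ring)
    refine image_norm_le_of_norm_deriv_right_le_deriv_boundary
      (f := g) (f' := fun s => f' (a + s • v) v - f' a v)
      (fun s hs => ((hgd s hs).continuousAt).continuousWithinAt)
      (fun s hs => ((hgd s (Set.mem_Icc_of_Ico hs)).hasDerivWithinAt)) ?_ hB ?_
    · simp [hg]
    · intro s hs
      have hs' : s ∈ Set.Icc (0:ℝ) 1 := Set.mem_Icc_of_Ico hs
      have h1 : ‖f' (a + s • v) v - f' a v‖ ≤ ‖f' (a + s • v) - f' a‖ * ‖v‖ := by
        have := (f' (a + s • v) - f' a).le_opNorm v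
        simpa using this
      have h2 := hLip _ (hseg s hs')
      have h3 : ‖a + s • v - a‖ = s * ‖v‖ := by
        simp [norm_smul, abs_of_nonneg hs'.1]
      calc ‖f' (a + s • v) v - f' a v‖ ≤ ‖f' (a + s • v) - f' a‖ * ‖v‖ := h1
        _ ≤ K * (s * ‖v‖) * ‖v‖ := by
            rw [← h3]; exact mul_le_mul_of_nonneg_right h2 (norm_nonneg _)
        _ = K * s * ‖v‖ ^ 2 := by ring
  have h1 := key 1 (by norm_num)
  have : g 1 = f b - f a - f' a v := by simp [hg, hv]; abel
  rw [this] at h1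
  simpa using h1

set_option maxHeartbeats 1000000 in
theorem stmt_10
    {X Y : Type*} [NormedAddCommGroup X] [NormedSpace ℝ X] [CompleteSpace X]
    [NormedAddCommGroup Y] [NormedSpace ℝ Y] [CompleteSpace Y]
    (U : Set X) (hU : IsOpen U) (f : X → Y) (f' : X → (X →L[ℝ] Y))
    (hf : ∀ x ∈ U, HasFDerivAt f (f' x) x)
    (x₀ : X) (hx₀ : x₀ ∈ U) (R : ℝ) (hR : 0 < R)
    (hball : Metric.closedBall x₀ R ⊆ U)
    (e₀ : X ≃L[ℝ] Y) (he₀ : (e₀ : X →L[ℝ] Y) = f' x₀)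
    (η K d : ℝ) (hη : 0 ≤ η) (hK : 0 < K) (hd : 0 < d) (hKd : K * d ≤ 1)
    (hη₀ : ‖e₀.symm (f x₀)‖ ≤ η)
    (hLip : ∀ x ∈ Metric.closedBall x₀ R, ∀ y ∈ Metric.closedBall x₀ R,
      ‖(e₀.symm : Y →L[ℝ] X).comp (f' x - f' y)‖ ≤ K * ‖x - y‖)
    (t : ℝ)
    (hroot : (η + d) - (1 + K * d) * t + 3 * K / 2 * t ^ 2 = 0)
    (hsmallest : ∀ s : ℝ, (η + d) - (1 + K * d) * s + 3 * K / 2 * s ^ 2 = 0 → t ≤ s)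
    (htR : t ≤ R) :
    (∀ z ∈ Metric.closedBall x₀ t, ∃ ez : X ≃L[ℝ] Y, (ez : X →L[ℝ] Y) = f' z ∧
      ∀ r : X, ‖r‖ ≤ d → z - ez.symm (f z) + r ∈ Metric.closedBall x₀ t) ∧
    (∀ (x rs : ℕ → X), x 0 = x₀ → (∀ k, ‖rs k‖ ≤ d) →
      (∀ k, ∀ ek : X ≃L[ℝ] Y, (ek : X →L[ℝ] Y) = f' (x k) →
        x (k + 1) = x k - ek.symm (f (x k)) + rs k) →
      ∀ k, x k ∈ Metric.closedBall x₀ t ∧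
        ∃ ek : X ≃L[ℝ] Y, (ek : X →L[ℝ] Y) = f' (x k)) := by
  -- basic facts about t
  have ht0 : 0 < t := by nlinarith [sq_nonneg t, mul_pos hK hd]
  have hKt : K * t ≤ 2 / 3 := by
    have hcalc : (η + d) - (1 + K * d) * (2 * (1 + K * d) / (3 * K) - t)
        + 3 * K / 2 * (2 * (1 + K * d) / (3 * K) - t) ^ 2
        = (η + d) - (1 + K * d) * t + 3 * K / 2 * t ^ 2 := by
      have h3K : (3 : ℝ) * K ≠ 0 := by positivity
      field_simp
      ring
    have hs := hsmallest (2 * (1 + K * d) / (3 * K) - t) (by rw [hcalc]; exact hroot)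
    have h3K : (0:ℝ) < 3 * K := by positivity
    rw [le_sub_iff_add_le] at hs
    have hs2 : (t + t) * (3 * K) ≤ 2 * (1 + K * d) := (le_div_iff₀ h3K).mp hs
    nlinarith [hs2]
  have hKt1 : K * t < 1 := lt_of_le_of_lt hKt (by norm_num)
  -- auxiliary maps
  set F : X → X := fun x => e₀.symm (f x) with hF
  set A : X → (X →L[ℝ] X) := fun x => (e₀.symm : Y →L[ℝ] X).comp (f' x) with hA
  have hsubR : Metric.closedBall x₀ t ⊆ Metric.closedBall x₀ R :=
    Metric.closedBall_subset_closedBall htR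
  have hmemU : ∀ x ∈ Metric.closedBall x₀ t, x ∈ U := fun x hx => hball (hsubR hx)
  have hFd : ∀ x ∈ Metric.closedBall x₀ t, HasFDerivAt F (A x) x := by
    intro x hx
    exact ((e₀.symm : Y →L[ℝ] X).hasFDerivAt).comp x (hf x (hmemU x hx))
  have hALip : ∀ x ∈ Metric.closedBall x₀ R, ∀ y ∈ Metric.closedBall x₀ R,
      ‖A x - A y‖ ≤ K * ‖x - y‖ := by
    intro x hx y hy
    have := hLip x hx y hy
    rwa [ContinuousLinearMap.comp_sub] at this
  -- main invariance statement
  have main : ∀ z ∈ Metric.closedBall x₀ t, ∃ ez : X ≃L[ℝ] Y,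
      (ez : X →L[ℝ] Y) = f' z ∧
      ∀ r : X, ‖r‖ ≤ d → z - ez.symm (f z) + r ∈ Metric.closedBall x₀ t := by
    intro z hz
    have hρ : ‖z - x₀‖ ≤ t := by rwa [Metric.mem_closedBall, dist_eq_norm] at hz
    have hρ0 : 0 ≤ ‖z - x₀‖ := norm_nonneg _
    -- perturbation bound
    have hone : (1 : X →L[ℝ] X) - A z = A x₀ - A z := by
      have : A x₀ = 1 := by
        ext w
        simp [hA, ← he₀]
      rw [this]
    have hpert : ‖(1 : X →L[ℝ] X) - A z‖ ≤ K * t := by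
      rw [hone]
      calc ‖A x₀ - A z‖ ≤ K * ‖x₀ - z‖ :=
            hALip x₀ (Metric.mem_closedBall_self hR.le) z (hsubR hz)
        _ = K * ‖z - x₀‖ := by rw [norm_sub_rev]
        _ ≤ K * t := by nlinarith
    have hpert1 : ‖(1 : X →L[ℝ] X) - A z‖ < 1 := lt_of_le_of_lt hpert hKt1
    -- the unit
    set u : (X →L[ℝ] X)ˣ := Units.oneSub ((1 : X →L[ℝ] X) - A z) hpert1 with hu
    have huval : (u : X →L[ℝ] X) = A z := by
      simp [hu, Units.oneSub]
    set ezX : X ≃L[ℝ] X := ContinuousLinearEquiv.ofUnit u with hezX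
    have hezXapp : ∀ w : X, ezX w = A z w := by
      intro w
      show (u : X →L[ℝ] X) w = A z w
      rw [huval]
    set ez : X ≃L[ℝ] Y := ezX.trans e₀ with hez
    have hezcoe : (ez : X →L[ℝ] Y) = f' z := by
      ext w
      have : e₀ (A z w) = f' z w := by simp [hA]
      simp [hez, ContinuousLinearEquiv.trans_apply, hezXapp w, this]
    refine ⟨ez, hezcoe, ?_⟩
    intro r hr
    -- inverse bound
    have hinv : ∀ w : X, (1 - K * t) * ‖ezX.symm w‖ ≤ ‖w‖ := by
      intro w
      set p := ezX.symm w with hp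
      have hw : A z p = w := by rw [← hezXapp]; simp [hp]
      have h1 : ‖p - A z p‖ ≤ K * t * ‖p‖ := by
        have := ((1 : X →L[ℝ] X) - A z).le_opNorm p
        have h2 : ((1 : X →L[ℝ] X) - A z) p = p - A z p := by simp
        rw [h2] at this
        calc ‖p - A z p‖ ≤ ‖(1 : X →L[ℝ] X) - A z‖ * ‖p‖ := this
          _ ≤ K * t * ‖p‖ := mul_le_mul_of_nonneg_right hpert (norm_nonneg _)
      have h3 : ‖p‖ ≤ ‖p - A z p‖ + ‖A z p‖ := by
        have := norm_add_le (p - A z p) (A z p)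
        simpa using this
      rw [hw] at h3
      rw [hw] at h1
      linarith
    -- Taylor bound
    have hseg : segment ℝ z x₀ ⊆ Metric.closedBall x₀ t :=
      (convex_closedBall x₀ t).segment_subset hz (Metric.mem_closedBall_self ht0.le)
    have htay : ‖F x₀ - F z - A z (x₀ - z)‖ ≤ K / 2 * ‖x₀ - z‖ ^ 2 := by
      apply taylor_quad_aux (f := F) (f' := A)
      · intro x hx; exact hFd x (hseg hx)
      · intro x hx
        exact hALip x (hsubR (hseg hx)) z (hsubR hz)
    -- the key vector
    have hkey : ‖A z (z - x₀) - F z‖ ≤ η + K / 2 * ‖z - x₀‖ ^ 2 := by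
      have hid : A z (z - x₀) - F z = (F x₀ - F z - A z (x₀ - z)) - F x₀ := by
        rw [map_sub, map_sub]; abel
      rw [hid]
      have h4 : ‖(F x₀ - F z - A z (x₀ - z)) - F x₀‖ ≤
          ‖F x₀ - F z - A z (x₀ - z)‖ + ‖F x₀‖ := norm_sub_le _ _
      have h5 : ‖x₀ - z‖ = ‖z - x₀‖ := norm_sub_rev _ _
      rw [h5] at htay
      have h6 : ‖F x₀‖ ≤ η := hη₀
      linarith
    -- assemble
    set v : X := ezX.symm (F z) with hv
    have hsymm : ez.symm (f z) = v := by
      rw [hez, ContinuousLinearEquiv.symm_trans_apply, hv]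
    have hw : ezX ((z - x₀) - v) = A z (z - x₀) - F z := by
      rw [map_sub, hezXapp]
      congr 1
      simp [hv]
    have hvb : (1 - K * t) * ‖(z - x₀) - v‖ ≤ η + K / 2 * ‖z - x₀‖ ^ 2 := by
      have := hinv (A z (z - x₀) - F z)
      rw [← hw] at this
      simp only [ContinuousLinearEquiv.symm_apply_apply] at this
      calc (1 - K * t) * ‖(z - x₀) - v‖ ≤ ‖ezX ((z - x₀) - v)‖ := this
        _ = ‖A z (z - x₀) - F z‖ := by rw [hw]
        _ ≤ η + K / 2 * ‖z - x₀‖ ^ 2 := hkey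
    rw [Metric.mem_closedBall, dist_eq_norm, hsymm]
    have hid2 : z - v + r - x₀ = ((z - x₀) - v) + r := by abel
    rw [hid2]
    have h7 : ‖((z - x₀) - v) + r‖ ≤ ‖(z - x₀) - v‖ + ‖r‖ := norm_add_le _ _
    have h8 : ‖(z - x₀) - v‖ ≤ t - d := by
      have hpos : (0:ℝ) < 1 - K * t := by linarith
      rw [← mul_le_mul_iff_right₀ hpos]
      calc (1 - K * t) * ‖(z - x₀) - v‖ ≤ η + K / 2 * ‖z - x₀‖ ^ 2 := hvb
        _ ≤ η + K / 2 * t ^ 2 := by nlinarith [mul_le_mul hρ hρ hρ0 ht0.le]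
        _ = (1 - K * t) * (t - d) := by nlinarith [hroot]
    linarith
  refine ⟨main, ?_⟩
  intro x rs hx0 hrs hrec k
  induction k with
  | zero =>
    have hmem : x 0 ∈ Metric.closedBall x₀ t := by
      rw [hx0]; exact Metric.mem_closedBall_self ht0.le
    obtain ⟨ez, hez, -⟩ := main (x 0) hmem
    exact ⟨hmem, ez, hez⟩
  | succ k ih =>
    obtain ⟨hmem, -⟩ := ih
    obtain ⟨ez, hez, hstep⟩ := main (x k) hmem
    have hx1 : x (k + 1) = x k - ez.symm (f (x k)) + rs k := hrec k ez hez
    have hmem1 : x (k + 1) ∈ Metric.closedBall x₀ t := by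
      rw [hx1]; exact hstep (rs k) (hrs k)
    obtain ⟨ez', hez', -⟩ := main (x (k + 1)) hmem1
    exact ⟨hmem1, ez', hez'⟩
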